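/- Compact form of the entropic restriction for complete erasures: let A be a finite nonempty type, Q : Matrix A A ℂ Hermitian, ρ0 a density matrix on A, and b > 0. Then (Matrix.trace (exp (-b • Q))).re ≤ Real.exp (S(ρ0)) if and only if for every density matrix ρ on A, (Matrix.trace (ρ * Q)).re ≥ b⁻¹ * (S(ρ) - S(ρ0)). -/

import Mathlib

open Matrix Kronecker
open scoped ComplexOrder

noncomputable section

/-- A density matrix: positive semidefinite with trace 1. -/
def IsDensityMatrix {ι : Type*} [Fintype ι] (ρ : Matrix ι ι ℂ) : Prop :=
  ρ.PosSemidef ∧ ρ.trace = 1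

/-- The matrix exponential. -/
noncomputable def mexp {ι : Type*} [Fintype ι] [DecidableEq ι] (M : Matrix ι ι ℂ) :
    Matrix ι ι ℂ :=
  NormedSpace.exp M

/-- Von Neumann entropy of a (Hermitian) matrix, via its eigenvalues. -/
noncomputable def vnEntropy {ι : Type*} [Fintype ι] [DecidableEq ι] (ρ : Matrix ι ι ℂ) : ℝ :=
  if h : ρ.IsHermitian then -∑ i, h.eigenvalues i * Real.log (h.eigenvalues i) else 0

/-- The Gibbs state of the Hamiltonian `H` at inverse temperature `b`. -/
noncomputable def gibbs {ι : Type*} [Fintype ι] [DecidableEq ι] (H : Matrix ι ι ℂ) (b : ℝ) :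
    Matrix ι ι ℂ :=
  (Matrix.trace (mexp (-b • H)))⁻¹ • mexp (-b • H)

/-- Equilibrium energy of the bath. -/
noncomputable def eqEnergy {ι : Type*} [Fintype ι] [DecidableEq ι] (H : Matrix ι ι ℂ) (b : ℝ) : ℝ :=
  (Matrix.trace (gibbs H b * H)).re

/-- Partial trace over the second (bath) factor. -/
def ptraceB {A B : Type*} [Fintype B] (M : Matrix (A × B) (A × B) ℂ) : Matrix A A ℂ :=
  Matrix.of fun a a' => ∑ k : B, M (a, k) (a', k)

/-- Partial trace over the first (device) factor. -/
def ptraceA {A B : Type*} [Fintype A] (M : Matrix (A × B) (A × B) ℂ) : Matrix B B ℂ :=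
  Matrix.of fun k k' => ∑ a : A, M (a, k) (a, k')

/-- The heat transfer operator of a realization setup. -/
noncomputable def hto {A B : Type*} [Fintype A] [DecidableEq A] [Fintype B] [DecidableEq B]
    (H_B : Matrix B B ℂ) (b : ℝ) (U : Matrix (A × B) (A × B) ℂ) : Matrix A A ℂ :=
  ptraceB (((1 : Matrix A A ℂ) ⊗ₖ gibbs H_B b) * Uᴴ * ((1 : Matrix A A ℂ) ⊗ₖ H_B) * U)
    - eqEnergy H_B b • (1 : Matrix A A ℂ)

/-- Matrix logarithm of a Hermitian matrix through the continuous functional calculus. -/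
noncomputable def mlog {ι : Type*} [Fintype ι] [DecidableEq ι] (ρ : Matrix ι ι ℂ) :
    Matrix ι ι ℂ :=
  if h : ρ.IsHermitian then h.cfc Real.log else 0

/-- Quantum relative entropy `S(σ‖ρ)`. -/
noncomputable def relEntropy {ι : Type*} [Fintype ι] [DecidableEq ι] (σ ρ : Matrix ι ι ℂ) : ℝ :=
  (Matrix.trace (σ * (mlog σ - mlog ρ))).re

end

section Aux

open Polynomial

lemma charpoly_unitary_conj {n : Type*} [Fintype n] [DecidableEq n] (U A : Matrix n n ℂ)
    (h1 : U * Uᴴ = 1) : (U * A * Uᴴ).charpoly = A.charpoly := by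
  have hmap1 : (U.map (C : ℂ →+* ℂ[X])) * (Uᴴ.map C) = 1 := by
    have := congrArg (C : ℂ →+* ℂ[X]).mapMatrix h1
    simpa [RingHom.mapMatrix_apply, Matrix.map_mul] using this
  have key : charmatrix (U * A * Uᴴ) = U.map C * charmatrix A * Uᴴ.map C := by
    unfold charmatrix
    rw [Matrix.mul_sub, Matrix.sub_mul]
    congr 1
    · symm
      rw [mul_assoc, (Matrix.scalar_commute X (fun r => Commute.all _ _) (Uᴴ.map C)).eq,
        ← mul_assoc, hmap1, one_mul]
    · simp [RingHom.mapMatrix_apply, Matrix.map_mul, Matrix.mul_assoc]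
  unfold Matrix.charpoly
  rw [key, Matrix.det_mul, Matrix.det_mul]
  have hd : (U.map (C : ℂ →+* ℂ[X])).det * (Uᴴ.map C).det = 1 := by
    rw [← Matrix.det_mul, hmap1, Matrix.det_one]
  linear_combination A.charmatrix.det * hd

lemma charpoly_diagonal {n : Type*} [Fintype n] [DecidableEq n] (v : n → ℂ) :
    (Matrix.diagonal v).charpoly = ∏ i, (X - C (v i)) := by
  unfold Matrix.charpoly charmatrix
  rw [RingHom.mapMatrix_apply, Matrix.diagonal_map (map_zero _)]
  rw [show (Matrix.scalar n X) = Matrix.diagonal (fun _ : n => X) from rfl]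
  rw [Matrix.diagonal_sub, Matrix.det_diagonal]

lemma eig_multiset {n : Type*} [Fintype n] [DecidableEq n]
    (W : Matrix n n ℂ) (h1 : W * Wᴴ = 1) (d : n → ℝ)
    (h : (W * Matrix.diagonal (fun i => (d i : ℂ)) * Wᴴ).IsHermitian) :
    Finset.univ.val.map h.eigenvalues = Finset.univ.val.map d := by
  have hV : (h.eigenvectorUnitary : Matrix n n ℂ) * (h.eigenvectorUnitary : Matrix n n ℂ)ᴴ = 1 := by
    simpa [Matrix.star_eq_conjTranspose] using
      (Matrix.mem_unitaryGroup_iff).mp h.eigenvectorUnitary.2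
  have e2 : W * Matrix.diagonal (fun i => (d i : ℂ)) * Wᴴ
      = (h.eigenvectorUnitary : Matrix n n ℂ)
        * Matrix.diagonal (fun i => ((h.eigenvalues i : ℝ) : ℂ))
        * (h.eigenvectorUnitary : Matrix n n ℂ)ᴴ := h.spectral_theorem
  have hch : (∏ i, (X - C ((h.eigenvalues i : ℝ) : ℂ))) = ∏ i, (X - C ((d i : ℝ) : ℂ)) := by
    calc (∏ i, (X - C ((h.eigenvalues i : ℝ) : ℂ)))
        = (Matrix.diagonal (fun i => ((h.eigenvalues i : ℝ) : ℂ))).charpoly :=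
          (_root_.charpoly_diagonal _).symm
      _ = ((h.eigenvectorUnitary : Matrix n n ℂ)
            * Matrix.diagonal (fun i => ((h.eigenvalues i : ℝ) : ℂ))
            * (h.eigenvectorUnitary : Matrix n n ℂ)ᴴ).charpoly :=
          (charpoly_unitary_conj _ _ hV).symm
      _ = (W * Matrix.diagonal (fun i => (d i : ℂ)) * Wᴴ).charpoly := by rw [← e2]
      _ = (Matrix.diagonal (fun i => (d i : ℂ))).charpoly := charpoly_unitary_conj _ _ h1
      _ = ∏ i, (X - C ((d i : ℝ) : ℂ)) := _root_.charpoly_diagonal _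
  have hprod : ((Finset.univ.val.map (fun i => ((h.eigenvalues i : ℝ) : ℂ))).map
        (fun a => X - C a)).prod
      = ((Finset.univ.val.map (fun i => ((d i : ℝ) : ℂ))).map (fun a => X - C a)).prod := by
    rw [Multiset.map_map, Multiset.map_map]; exact hch
  have hroots := congrArg Polynomial.roots hprod
  rw [Polynomial.roots_multiset_prod_X_sub_C, Polynomial.roots_multiset_prod_X_sub_C] at hroots
  have := congrArg (Multiset.map Complex.re) hroots
  simpa [Multiset.map_map] using this

lemma eig_sum {n : Type*} [Fintype n] [DecidableEq n]
    (W : Matrix n n ℂ) (h1 : W * Wᴴ = 1) (d : n → ℝ)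
    (h : (W * Matrix.diagonal (fun i => (d i : ℂ)) * Wᴴ).IsHermitian) (F : ℝ → ℝ) :
    ∑ i, F (h.eigenvalues i) = ∑ i, F (d i) := by
  have := congrArg (fun s : Multiset ℝ => (s.map F).sum) (eig_multiset W h1 d h)
  simp only [Multiset.map_map] at this
  exact this

lemma jensen_core {n : Type*} [Fintype n] (p ε : n → ℝ) (m : n → n → ℝ)
    (hp : ∀ i, 0 ≤ p i) (hp1 : ∑ i, p i = 1)
    (hm : ∀ i j, 0 ≤ m i j) (hrow : ∀ i, ∑ j, m i j = 1) (hcol : ∀ j, ∑ i, m i j = 1) :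
    (-∑ i, p i * Real.log (p i)) - ∑ i, ∑ j, p i * m i j * ε j
      ≤ Real.log (∑ j, Real.exp (-ε j)) := by
  classical
  set w : n × n → ℝ := fun ij => p ij.1 * m ij.1 ij.2 with hw
  set x : n × n → ℝ := fun ij => Real.exp (-ε ij.2) / p ij.1 with hx
  set t : Finset (n × n) := Finset.univ.filter (fun ij => w ij ≠ 0) with ht
  have hw0 : ∀ ij, 0 ≤ w ij := fun ij => mul_nonneg (hp _) (hm _ _)
  have hwsum : ∑ ij ∈ t, w ij = 1 := by
    rw [ht, Finset.sum_filter_ne_zero, Fintype.sum_prod_type]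
    calc ∑ i, ∑ j, w (i, j) = ∑ i, p i * ∑ j, m i j := by
          simp [hw, Finset.mul_sum]
      _ = 1 := by simp only [hrow, mul_one]; exact hp1
  have hpos : ∀ ij ∈ t, 0 < p ij.1 ∧ 0 < m ij.1 ij.2 := by
    intro ij hij
    rw [ht, Finset.mem_filter] at hij
    have h1 := hij.2
    constructor
    · rcases (hp ij.1).lt_or_eq with h | h
      · exact h
      · exact absurd (by rw [hw]; simp [← h]) h1
    · rcases (hm ij.1 ij.2).lt_or_eq with h | h
      · exact h
      · exact absurd (by rw [hw]; simp [← h]) h1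
  have hxpos : ∀ ij ∈ t, x ij ∈ Set.Ioi (0:ℝ) := fun ij hij =>
    Set.mem_Ioi.mpr (div_pos (Real.exp_pos _) (hpos ij hij).1)
  have hLHS : (-∑ i, p i * Real.log (p i)) - ∑ i, ∑ j, p i * m i j * ε j
      = ∑ ij ∈ t, w ij * Real.log (x ij) := by
    have inner : ∀ i, ∑ j, w (i, j) * (-Real.log (p i) - ε j)
        = -(p i * Real.log (p i)) - ∑ j, p i * m i j * ε j := by
      intro i
      calc ∑ j, w (i, j) * (-Real.log (p i) - ε j)
          = ∑ j, ((-Real.log (p i) * p i) * m i j - p i * m i j * ε j) := by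
            apply Finset.sum_congr rfl; intro j _; simp only [hw]; ring
        _ = (-Real.log (p i) * p i) * (∑ j, m i j) - ∑ j, p i * m i j * ε j := by
            rw [Finset.sum_sub_distrib, Finset.mul_sum]
        _ = -(p i * Real.log (p i)) - ∑ j, p i * m i j * ε j := by rw [hrow]; ring
    have e1 : ∑ ij : n × n, w ij * (-Real.log (p ij.1) - ε ij.2)
        = (-∑ i, p i * Real.log (p i)) - ∑ i, ∑ j, p i * m i j * ε j := by
      rw [Fintype.sum_prod_type]
      rw [Finset.sum_congr rfl (fun i _ => inner i), Finset.sum_sub_distrib]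
      congr 1
      rw [← Finset.sum_neg_distrib]
    rw [← e1]
    rw [← Finset.sum_subset (Finset.subset_univ t) (by
      intro ij _ hij
      have : w ij = 0 := by
        by_contra hne
        exact hij (Finset.mem_filter.mpr ⟨Finset.mem_univ _, hne⟩)
      rw [this, zero_mul])]
    apply Finset.sum_congr rfl
    intro ij hij
    congr 1
    rw [hx]
    rw [Real.log_div (Real.exp_ne_zero _) (hpos ij hij).1.ne', Real.log_exp]
    ring
  have hjen := (strictConcaveOn_log_Ioi.concaveOn).le_map_sum
    (fun ij (_ : ij ∈ t) => hw0 ij) hwsum hxpos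
  have hsum_wx : ∑ ij ∈ t, w ij • x ij = ∑ ij ∈ t, m ij.1 ij.2 * Real.exp (-ε ij.2) := by
    apply Finset.sum_congr rfl
    intro ij hij
    have hp' : p ij.1 ≠ 0 := (hpos ij hij).1.ne'
    rw [smul_eq_mul, hw, hx]
    field_simp
  have hle : ∑ ij ∈ t, m ij.1 ij.2 * Real.exp (-ε ij.2) ≤ ∑ j, Real.exp (-ε j) := by
    calc ∑ ij ∈ t, m ij.1 ij.2 * Real.exp (-ε ij.2)
        ≤ ∑ ij : n × n, m ij.1 ij.2 * Real.exp (-ε ij.2) :=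
          Finset.sum_le_sum_of_subset_of_nonneg (Finset.subset_univ t)
            (fun ij _ _ => mul_nonneg (hm _ _) (Real.exp_pos _).le)
      _ = ∑ j, Real.exp (-ε j) := by
          rw [Fintype.sum_prod_type_right]
          apply Finset.sum_congr rfl
          intro j _
          calc ∑ i : n, m (i, j).1 (i, j).2 * Real.exp (-ε (i, j).2)
              = (∑ i : n, m i j) * Real.exp (-ε j) := by rw [Finset.sum_mul]
            _ = Real.exp (-ε j) := by rw [hcol, one_mul]
  have htne : t.Nonempty := by
    rcases Finset.eq_empty_or_nonempty t with h | h
    · rw [h, Finset.sum_empty] at hwsum; norm_num at hwsum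
    · exact h
  have hpos_sum : 0 < ∑ ij ∈ t, w ij • x ij := by
    apply Finset.sum_pos
    · intro ij hij
      have hwpos : 0 < w ij := (hw0 ij).lt_of_ne' (Finset.mem_filter.mp hij).2
      exact smul_pos hwpos (Set.mem_Ioi.mp (hxpos ij hij))
    · exact htne
  calc (-∑ i, p i * Real.log (p i)) - ∑ i, ∑ j, p i * m i j * ε j
      = ∑ ij ∈ t, w ij * Real.log (x ij) := hLHS
    _ ≤ Real.log (∑ ij ∈ t, w ij • x ij) := by
        simpa [smul_eq_mul] using hjen
    _ ≤ Real.log (∑ j, Real.exp (-ε j)) :=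
        Real.log_le_log hpos_sum (by rw [hsum_wx]; exact hle)

lemma trace_conj_eq {n : Type*} [Fintype n] [DecidableEq n] (W D : Matrix n n ℂ)
    (hW : Wᴴ * W = 1) : Matrix.trace (W * D * Wᴴ) = Matrix.trace D := by
  rw [Matrix.trace_mul_comm, ← Matrix.mul_assoc, hW, Matrix.one_mul]

lemma trace_re_conj {n : Type*} [Fintype n] [DecidableEq n] (M : Matrix n n ℂ) (p ε : n → ℝ) :
    (Matrix.trace (Matrix.diagonal (fun i => (p i : ℂ)) * M
        * Matrix.diagonal (fun j => (ε j : ℂ)) * Mᴴ)).re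
      = ∑ i, ∑ j, p i * Complex.normSq (M i j) * ε j := by
  have hentry : ∀ i, (Matrix.diagonal (fun i => (p i : ℂ)) * M
      * Matrix.diagonal (fun j => (ε j : ℂ)) * Mᴴ) i i
      = ((∑ j, p i * Complex.normSq (M i j) * ε j : ℝ) : ℂ) := by
    intro i
    rw [Matrix.mul_apply]
    push_cast
    apply Finset.sum_congr rfl
    intro j _
    rw [Matrix.mul_diagonal, Matrix.diagonal_mul, Matrix.conjTranspose_apply]
    calc (p i : ℂ) * M i j * (ε j : ℂ) * star (M i j)
        = (p i : ℂ) * (M i j * star (M i j)) * (ε j : ℂ) := by ring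
      _ = (p i : ℂ) * (Complex.normSq (M i j) : ℂ) * (ε j : ℂ) := by
          rw [Complex.star_def, Complex.mul_conj]
      _ = _ := by ring
  rw [Matrix.trace]
  rw [Finset.sum_congr rfl (fun i _ => by rw [Matrix.diag_apply, hentry i])]
  rw [← Complex.ofReal_sum]
  exact Complex.ofReal_re _

lemma trace_mexp {n : Type*} [Fintype n] [DecidableEq n] (Q : Matrix n n ℂ)
    (hQ : Q.IsHermitian) (b : ℝ) :
    (Matrix.trace (NormedSpace.exp (-b • Q))).re
      = ∑ j, Real.exp (-(b * hQ.eigenvalues j)) := by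
  set W := (hQ.eigenvectorUnitary : Matrix n n ℂ) with hWdef
  have hW1 : W * Wᴴ = 1 := by
    simpa [Matrix.star_eq_conjTranspose] using
      (Matrix.mem_unitaryGroup_iff).mp hQ.eigenvectorUnitary.2
  have hW2 : Wᴴ * W = 1 := mul_eq_one_comm.mp hW1
  have hinv : W⁻¹ = Wᴴ := Matrix.inv_eq_left_inv hW2
  have hQe : -b • Q = W * Matrix.diagonal (fun j => ((-(b * hQ.eigenvalues j) : ℝ) : ℂ)) * W⁻¹ := by
    rw [hinv]
    have hsp : Q = W * Matrix.diagonal (fun j => ((hQ.eigenvalues j : ℝ) : ℂ)) * Wᴴ :=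
      hQ.spectral_theorem
    rw [show -b • Q = -b • ((W * Matrix.diagonal fun j => ((hQ.eigenvalues j : ℝ) : ℂ)) * Wᴴ)
      from congrArg (fun M => -b • M) hsp]
    rw [← smul_mul_assoc, ← mul_smul_comm, ← Matrix.diagonal_smul]
    have hfun : (-b • fun j => ((hQ.eigenvalues j : ℝ) : ℂ))
        = fun j => ((-(b * hQ.eigenvalues j) : ℝ) : ℂ) := by
      funext j
      simp [Complex.real_smul]
    rw [hfun]
  rw [hQe, Matrix.exp_conj W _ (⟨⟨W, Wᴴ, hW1, hW2⟩, rfl⟩ : IsUnit W), Matrix.exp_diagonal, hinv,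
    trace_conj_eq _ _ hW2, Matrix.trace_diagonal]
  rw [show (NormedSpace.exp fun j => ((-(b * hQ.eigenvalues j) : ℝ) : ℂ))
      = fun j => NormedSpace.exp ((-(b * hQ.eigenvalues j) : ℝ) : ℂ) from Pi.exp_def _]
  simp only [← Complex.exp_eq_exp_ℂ, Complex.re_sum]
  apply Finset.sum_congr rfl
  intro j _
  rw [← Complex.ofReal_exp]
  exact Complex.ofReal_re _

lemma row_sum_normSq {n : Type*} [Fintype n] [DecidableEq n] (M : Matrix n n ℂ)
    (h : M * Mᴴ = 1) (i : n) : ∑ j, Complex.normSq (M i j) = 1 := by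
  have h1 : ((M * Mᴴ) i i).re = 1 := by rw [h]; simp [Matrix.one_apply]
  rw [Matrix.mul_apply] at h1
  rw [← h1, Complex.re_sum]
  apply Finset.sum_congr rfl
  intro j _
  rw [Matrix.conjTranspose_apply, Complex.star_def, Complex.mul_conj, Complex.ofReal_re]

end Aux



/-- Compact form of the entropic restriction for complete erasures. -/
theorem compact_entropic_restriction_complete_erasure
    {A : Type*} [Fintype A] [DecidableEq A] [Nonempty A]
    (Q : Matrix A A ℂ) (hQ : Q.IsHermitian)
    (ρ0 : Matrix A A ℂ) (hρ0 : IsDensityMatrix ρ0)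
    {b : ℝ} (hb : 0 < b) :
    (Matrix.trace (mexp (-b • Q))).re ≤ Real.exp (vnEntropy ρ0) ↔
      ∀ ρ : Matrix A A ℂ, IsDensityMatrix ρ →
        (Matrix.trace (ρ * Q)).re ≥ b⁻¹ * (vnEntropy ρ - vnEntropy ρ0) := by
  classical
  set ε := hQ.eigenvalues with hεdef
  set W := (hQ.eigenvectorUnitary : Matrix A A ℂ) with hWdef
  have hW1 : W * Wᴴ = 1 := by
    simpa [Matrix.star_eq_conjTranspose] using
      (Matrix.mem_unitaryGroup_iff).mp hQ.eigenvectorUnitary.2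
  have hW2 : Wᴴ * W = 1 := mul_eq_one_comm.mp hW1
  have hQsp : Q = W * Matrix.diagonal (fun j => ((ε j : ℝ) : ℂ)) * Wᴴ := hQ.spectral_theorem
  set Z := ∑ j, Real.exp (-(b * ε j)) with hZdef
  have hZpos : 0 < Z := Finset.sum_pos (fun j _ => Real.exp_pos _) Finset.univ_nonempty
  set S0 := vnEntropy ρ0 with hS0def
  have hTr : (Matrix.trace (mexp (-b • Q))).re = Z := trace_mexp Q hQ b
  -- Key inequality: for any density matrix ρ, S(ρ) - b * Tr(ρQ) ≤ log Z
  have hKey : ∀ ρ : Matrix A A ℂ, IsDensityMatrix ρ →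
      vnEntropy ρ - b * (Matrix.trace (ρ * Q)).re ≤ Real.log Z := by
    intro ρ hρ
    have hH : ρ.IsHermitian := hρ.1.1
    set p := hH.eigenvalues with hpdef
    set V := (hH.eigenvectorUnitary : Matrix A A ℂ) with hVdef
    have hV1 : V * Vᴴ = 1 := by
      simpa [Matrix.star_eq_conjTranspose] using
        (Matrix.mem_unitaryGroup_iff).mp hH.eigenvectorUnitary.2
    have hV2 : Vᴴ * V = 1 := mul_eq_one_comm.mp hV1
    have hρsp : ρ = V * Matrix.diagonal (fun i => ((p i : ℝ) : ℂ)) * Vᴴ := hH.spectral_theorem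
    set M := Vᴴ * W with hMdef
    have hM1 : M * Mᴴ = 1 := by
      rw [hMdef, Matrix.conjTranspose_mul, Matrix.conjTranspose_conjTranspose, Matrix.mul_assoc,
        ← Matrix.mul_assoc W, hW1, Matrix.one_mul, hV2]
    have hM2 : Mᴴ * M = 1 := mul_eq_one_comm.mp hM1
    set m : A → A → ℝ := fun i j => Complex.normSq (M i j) with hmdef
    have hp0 : ∀ i, 0 ≤ p i := hρ.1.eigenvalues_nonneg
    have hp1 : ∑ i, p i = 1 := by
      have h1 : Matrix.trace ρ = Matrix.trace (Matrix.diagonal (fun i => ((p i : ℝ) : ℂ))) := by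
        conv_lhs => rw [hρsp]
        exact trace_conj_eq _ _ hV2
      rw [hρ.2, Matrix.trace_diagonal] at h1
      have := congrArg Complex.re h1
      rw [Complex.re_sum] at this
      simpa using this.symm
    have hrow : ∀ i, ∑ j, m i j = 1 := row_sum_normSq M hM1
    have hcol : ∀ j, ∑ i, m i j = 1 := by
      intro j
      have hrs := row_sum_normSq Mᴴ (by rw [Matrix.conjTranspose_conjTranspose]; exact hM2) j
      calc ∑ i, m i j = ∑ i, Complex.normSq (Mᴴ j i) := by
            apply Finset.sum_congr rfl
            intro i _
            rw [Matrix.conjTranspose_apply, hmdef]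
            simp [Complex.normSq_conj]
        _ = 1 := hrs
    have htr : (Matrix.trace (ρ * Q)).re = ∑ i, ∑ j, p i * m i j * ε j := by
      have halg : ρ * Q = V * (Matrix.diagonal (fun i => ((p i : ℝ) : ℂ)) * M
          * Matrix.diagonal (fun j => ((ε j : ℝ) : ℂ)) * Mᴴ) * Vᴴ := by
        conv_lhs => rw [hρsp]
        conv_lhs => rw [hQsp]
        rw [hMdef]
        simp only [Matrix.conjTranspose_mul, Matrix.conjTranspose_conjTranspose,
          Matrix.mul_assoc, hV1, Matrix.mul_one]
      rw [halg, trace_conj_eq _ _ hV2, trace_re_conj]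
    rw [htr]
    have hvn : vnEntropy ρ = -∑ i, p i * Real.log (p i) := by
      rw [vnEntropy, dif_pos hH]
    rw [hvn]
    have hmul : b * ∑ i, ∑ j, p i * m i j * ε j = ∑ i, ∑ j, p i * m i j * (b * ε j) := by
      rw [Finset.mul_sum]
      apply Finset.sum_congr rfl
      intro i _
      rw [Finset.mul_sum]
      apply Finset.sum_congr rfl
      intro j _
      ring
    rw [hmul]
    have hjc := jensen_core p (fun j => b * ε j) m hp0 hp1
      (fun i j => Complex.normSq_nonneg _) hrow hcol
    simpa using hjc
  -- The Gibbs state achieves equality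
  set q : A → ℝ := fun j => Real.exp (-(b * ε j)) / Z with hqdef
  have hqpos : ∀ j, 0 < q j := fun j => div_pos (Real.exp_pos _) hZpos
  have hqsum : ∑ j, q j = 1 := by
    rw [hqdef, ← Finset.sum_div]
    exact div_self hZpos.ne'
  set ρg : Matrix A A ℂ := W * Matrix.diagonal (fun j => ((q j : ℝ) : ℂ)) * Wᴴ with hρgdef
  have hρgPSD : ρg.PosSemidef := by
    rw [hρgdef]
    apply Matrix.PosSemidef.mul_mul_conjTranspose_same
    apply Matrix.posSemidef_diagonal_iff.mpr
    intro j
    simpa using (hqpos j).le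
  have hρgH : ρg.IsHermitian := hρgPSD.1
  have hρgD : IsDensityMatrix ρg := by
    refine ⟨hρgPSD, ?_⟩
    rw [hρgdef, trace_conj_eq _ _ hW2, Matrix.trace_diagonal, ← Complex.ofReal_sum, hqsum,
        Complex.ofReal_one]
  have hvng : vnEntropy ρg = -∑ j, q j * Real.log (q j) := by
    rw [vnEntropy, dif_pos hρgH]
    congr 1
    exact eig_sum W hW1 q hρgH (fun t => t * Real.log t)
  have htrg : (Matrix.trace (ρg * Q)).re = ∑ j, q j * ε j := by
    have halg2 : ρg * Q = W * (Matrix.diagonal (fun j => ((q j : ℝ) : ℂ))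
        * Matrix.diagonal (fun j => ((ε j : ℝ) : ℂ))) * Wᴴ := by
      rw [hρgdef]
      conv_lhs => rw [hQsp]
      have h5 : Wᴴ * ((W * (Matrix.diagonal (fun j => ((ε j : ℝ) : ℂ)) * Wᴴ)))
          = Matrix.diagonal (fun j => ((ε j : ℝ) : ℂ)) * Wᴴ := by
        rw [← Matrix.mul_assoc, hW2, Matrix.one_mul]
      simp only [Matrix.mul_assoc]
      rw [h5]
    rw [halg2, trace_conj_eq _ _ hW2, Matrix.diagonal_mul_diagonal, Matrix.trace_diagonal]
    have : ∀ j, ((q j : ℝ) : ℂ) * ((ε j : ℝ) : ℂ) = ((q j * ε j : ℝ) : ℂ) := by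
      intro j; push_cast; ring
    rw [Finset.sum_congr rfl (fun j _ => this j), ← Complex.ofReal_sum]
    exact Complex.ofReal_re _
  have hlogq : ∀ j, Real.log (q j) = -(b * ε j) - Real.log Z := by
    intro j
    rw [hqdef]
    rw [Real.log_div (Real.exp_ne_zero _) hZpos.ne', Real.log_exp]
  have hgibbs : vnEntropy ρg - b * (∑ j, q j * ε j) = Real.log Z := by
    rw [hvng]
    have e : ∑ j, q j * Real.log (q j) = ∑ j, (-(b * (q j * ε j)) - q j * Real.log Z) :=
      Finset.sum_congr rfl (fun j _ => by rw [hlogq j]; ring)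
    rw [e, Finset.sum_sub_distrib, Finset.sum_neg_distrib, ← Finset.sum_mul, hqsum, one_mul]
    have hb2 : ∑ j, b * (q j * ε j) = b * ∑ j, q j * ε j := by rw [Finset.mul_sum]
    rw [hb2]
    ring
  constructor
  · intro h ρ hρd
    rw [hTr] at h
    have hlog : Real.log Z ≤ S0 := (Real.log_le_iff_le_exp hZpos).mpr h
    have hk := hKey ρ hρd
    rw [ge_iff_le]
    have h1 : vnEntropy ρ - S0 ≤ b * (Matrix.trace (ρ * Q)).re := by linarith
    calc b⁻¹ * (vnEntropy ρ - S0) ≤ b⁻¹ * (b * (Matrix.trace (ρ * Q)).re) :=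
          mul_le_mul_of_nonneg_left h1 (inv_nonneg.mpr hb.le)
      _ = (Matrix.trace (ρ * Q)).re := by field_simp
  · intro h
    have hg := h ρg hρgD
    rw [ge_iff_le, htrg] at hg
    have h2 : b * (b⁻¹ * (vnEntropy ρg - S0)) ≤ b * (∑ j, q j * ε j) :=
      mul_le_mul_of_nonneg_left hg hb.le
    rw [← mul_assoc, mul_inv_cancel₀ hb.ne', one_mul] at h2
    have hlog : Real.log Z ≤ S0 := by linarith
    rw [hTr]
    exact (Real.log_le_iff_le_exp hZpos).mp hlog
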